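/- Let G be a group, G' an abelian normal subgroup of G, and b ∈ G such that every element of G can be written as b^i · g' for some i ∈ ℤ and g' ∈ G' (i.e. G/G' is cyclic generated by the image of b). Then the commutator subgroup ⁅G, G⁆ of G equals ⁅G, G'⁆, the subgroup generated by all commutators of an element of G with an element of G'. -/

import Mathlib

open scoped commutatorElement

/-- If `G'` is an abelian normal subgroup of `G` and `b ∈ G` is such that every element
of `G` is of the form `b ^ i * g'` with `i : ℤ` and `g' ∈ G'` (i.e. `G/G'` is cyclic,
generated by the image of `b`), then `⁅G, G⁆ = ⁅G, G'⁆`. -/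
theorem stmt3 (G : Type*) [Group G] (G' : Subgroup G) [G'.Normal] [IsMulCommutative G']
    (b : G) (hb : ∀ x : G, ∃ (i : ℤ) (g' : G), g' ∈ G' ∧ x = b ^ i * g') :
    commutator G = ⁅(⊤ : Subgroup G), G'⁆ := by
  set N : Subgroup G := ⁅(⊤ : Subgroup G), G'⁆ with hN
  have hnorm : N.Normal := Subgroup.commutator_normal ⊤ G'
  apply le_antisymm
  · rw [commutator_def, Subgroup.commutator_le]
    intro g1 _ g2 _
    let f := QuotientGroup.mk' N
    rw [← QuotientGroup.eq_one_iff]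
    show f ⁅g1, g2⁆ = 1
    rw [map_commutatorElement, commutatorElement_eq_one_iff_commute]
    have hc : ∀ g' ∈ G', ∀ y : G ⧸ N, Commute (f g') y := by
      intro g' hg' y
      induction y using QuotientGroup.induction_on with
      | H y =>
        show f g' * f y = f y * f g'
        rw [← map_mul, ← map_mul, QuotientGroup.mk'_eq_mk']
        exact ⟨⁅y⁻¹, g'⁻¹⁆,
          Subgroup.commutator_mem_commutator (Subgroup.mem_top _) (G'.inv_mem hg'),
          by group⟩
    obtain ⟨i, g, hg, rfl⟩ := hb g1
    obtain ⟨j, h, hh, rfl⟩ := hb g2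
    rw [map_mul, map_mul, map_zpow, map_zpow]
    exact (((Commute.refl (f b)).zpow_zpow i j).mul_right
      (hc h hh (f b ^ i)).symm).mul_left ((hc g hg (f b ^ j)).mul_right (hc g hg (f h)))
  · exact Subgroup.commutator_mono le_rfl le_top
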